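/- Let N, d ≥ 1, let ν_I : (ZMod N)^I → ℝ for I ⊊ {1,…,d} be nonnegative weights with ∏_{I ⊊ {1,…,d}} ν_I(x_I) > 0 for every x ∈ Ω, let ν_{[d]} : (ZMod N)^d → ℝ be nonnegative, and let Ω ⊆ (ZMod N)^d have face structure. Assume that ⟨f, Df⟩_ν > 0 for every f ∈ F_T that is not identically zero. Then for every f ∈ F_T, the dual BAC-norm ‖f‖*_BAC := max{ |⟨f,φ⟩_ν| : φ ∈ F_T, ‖φ‖_BAC ≤ 1 } equals inf{ Σ_{i=1}^k |λ_i| : k ∈ ℕ, λ_i ∈ ℝ, g_i ∈ S_T, f = Σ_{i=1}^k λ_i Dg_i }. -/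

import Mathlib

noncomputable section
open Finset

/-- `P_ω(x,y)`: the point whose `i`-th coordinate is `x i` if `ω i = false` and `y i` otherwise. -/
def proj {ι : Type*} {N : ℕ} (ω : ι → Bool) (x y : ι → ZMod N) : ι → ZMod N :=
  fun i => if ω i then y i else x i

/-- `P_{ω_I}(x_I, y_I)` as a function on the subtype `↥I`. -/
def projI {ι : Type*} {N : ℕ} {I : Finset ι} (ω : I → Bool) (x y : ι → ZMod N) :
    I → ZMod N :=
  fun i => if ω i then y i.1 else x i.1

/-- The weighted inner product `⟨f,g⟩_ν`. -/
def wInner {ι : Type*} [Fintype ι] [DecidableEq ι] {N : ℕ} [NeZero N]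
    (ν : (I : Finset ι) → (I → ZMod N) → ℝ) (f g : (ι → ZMod N) → ℝ) : ℝ :=
  Finset.expect Finset.univ fun x : ι → ZMod N =>
    f x * g x * ∏ I ∈ univ.filter (fun I : Finset ι => I ≠ univ), ν I (fun i => x i.1)

/-- The dual function `Df`. -/
def dualFn {ι : Type*} [Fintype ι] [DecidableEq ι] {N : ℕ} [NeZero N]
    (ν : (I : Finset ι) → (I → ZMod N) → ℝ) (f : (ι → ZMod N) → ℝ)
    (x : ι → ZMod N) : ℝ :=
  Finset.expect Finset.univ fun y : ι → ZMod N =>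
    (∏ ω ∈ univ.filter (fun ω : ι → Bool => ω ≠ fun _ => false), f (proj ω x y)) *
      ∏ I ∈ univ.filter (fun I : Finset ι => I ≠ univ),
        ∏ ω ∈ univ.filter (fun ω : I → Bool => ω ≠ fun _ => false), ν I (projI ω x y)

/-- A set `Ω` has face structure if it is the intersection of sets `Ω_J` over `∅ ≠ J ⊊ ι`,
where membership in `Ω_J` depends only on the coordinates outside of `J`. -/
def HasFaceStructure {ι : Type*} [Fintype ι] [DecidableEq ι] {N : ℕ}
    (Ω : Set (ι → ZMod N)) : Prop :=
  ∃ ΩJ : Finset ι → Set (ι → ZMod N),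
    (∀ J : Finset ι, J ≠ ∅ → J ≠ univ →
      ∀ x y : ι → ZMod N, (∀ i, i ∉ J → x i = y i) → (x ∈ ΩJ J → y ∈ ΩJ J)) ∧
    Ω = ⋂ J ∈ {J : Finset ι | J ≠ ∅ ∧ J ≠ univ}, ΩJ J

/-- `F_T`: functions supported on `Ω`. -/
def FT {ι : Type*} {N : ℕ} (Ω : Set (ι → ZMod N)) : Set ((ι → ZMod N) → ℝ) :=
  {f | ∀ x, x ∉ Ω → f x = 0}

/-- `S_T`: functions supported on `Ω` and dominated by `ν_{[d]} + 2`. -/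
def STset {ι : Type*} {N : ℕ} (Ω : Set (ι → ZMod N)) (νd : (ι → ZMod N) → ℝ) :
    Set ((ι → ZMod N) → ℝ) :=
  {f | f ∈ FT Ω ∧ ∀ x, |f x| ≤ νd x + 2}

/-- The basic anti-correlation norm `‖f‖_BAC = max_{g ∈ S_T} |⟨f, Dg⟩_ν|`. -/
def BACnorm {ι : Type*} [Fintype ι] [DecidableEq ι] {N : ℕ} [NeZero N]
    (ν : (I : Finset ι) → (I → ZMod N) → ℝ) (Ω : Set (ι → ZMod N))
    (νd : (ι → ZMod N) → ℝ) (f : (ι → ZMod N) → ℝ) : ℝ :=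
  sSup ((fun g => |wInner ν f (dualFn ν g)|) '' STset Ω νd)

----------------------------------------------------------------
-- Auxiliary lemmas
----------------------------------------------------------------

section AuxLemmas

variable {d N : ℕ} [NeZero N]

abbrev EE (d N : ℕ) : Type := (Fin d → ZMod N) → ℝ

variable (ν : (I : Finset (Fin d)) → (I → ZMod N) → ℝ)

lemma wInner_symm (f g : EE d N) : wInner ν f g = wInner ν g f := by
  unfold wInner
  exact Finset.expect_congr rfl fun x _ => by ring

/-- `wInner` as a bilinear map. -/
def wB : EE d N →ₗ[ℝ] EE d N →ₗ[ℝ] ℝ :=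
  LinearMap.mk₂ ℝ (wInner ν)
    (fun f f' g => by
      unfold wInner
      rw [← Finset.expect_add_distrib]
      exact Finset.expect_congr rfl fun x _ => by simp [Pi.add_apply]; ring)
    (fun c f g => by
      unfold wInner
      rw [smul_eq_mul, Finset.mul_expect]
      exact Finset.expect_congr rfl fun x _ => by simp [Pi.smul_apply]; ring)
    (fun f g g' => by
      unfold wInner
      rw [← Finset.expect_add_distrib]
      exact Finset.expect_congr rfl fun x _ => by simp [Pi.add_apply]; ring)
    (fun c f g => by
      unfold wInner
      rw [smul_eq_mul, Finset.mul_expect]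
      exact Finset.expect_congr rfl fun x _ => by simp [Pi.smul_apply]; ring)

@[simp] lemma wB_apply (f g : EE d N) : wB ν f g = wInner ν f g := rfl

lemma wInner_zero_left (g : EE d N) : wInner ν 0 g = 0 := by
  simp [wInner]

lemma wInner_zero_right (f : EE d N) : wInner ν f 0 = 0 := by
  simp [wInner]

lemma wInner_self_nonneg
    (hν : ∀ I : Finset (Fin d), I ≠ univ → ∀ z, 0 ≤ ν I z) (f : EE d N) :
    0 ≤ wInner ν f f := by
  refine Finset.expect_nonneg fun x _ => ?_
  refine mul_nonneg (mul_self_nonneg _) (Finset.prod_nonneg fun I hI => ?_)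
  exact hν I (Finset.mem_filter.mp hI).2 _

lemma wInner_self_eq_zero
    (hν : ∀ I : Finset (Fin d), I ≠ univ → ∀ z, 0 ≤ ν I z)
    {Ω : Set (Fin d → ZMod N)}
    (hprod : ∀ x ∈ Ω,
      0 < ∏ I ∈ univ.filter (fun I : Finset (Fin d) => I ≠ univ), ν I (fun i => x i.1))
    {f : EE d N} (hFT : f ∈ FT Ω) (h : wInner ν f f = 0) : f = 0 := by
  have hnn : ∀ x ∈ (univ : Finset (Fin d → ZMod N)),
      0 ≤ f x * f x * ∏ I ∈ univ.filter (fun I : Finset (Fin d) => I ≠ univ),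
        ν I (fun i => x i.1) := by
    intro x _
    exact mul_nonneg (mul_self_nonneg _)
      (Finset.prod_nonneg fun I hI => hν I (Finset.mem_filter.mp hI).2 _)
  have hall := (Finset.expect_eq_zero_iff_of_nonneg hnn).mp h
  funext x
  by_cases hx : x ∈ Ω
  · have h0 := hall x (Finset.mem_univ x)
    have hw := hprod x hx
    have : f x * f x = 0 := by
      rcases mul_eq_zero.mp h0 with h0 | h0
      · exact h0
      · exact absurd h0 (ne_of_gt hw)
    simpa using mul_self_eq_zero.mp this
  · simpa using hFT x hx

end AuxLemmas

section AuxLemmas2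

variable {d N : ℕ} [NeZero N]
variable (ν : (I : Finset (Fin d)) → (I → ZMod N) → ℝ)

/-- `FT Ω` as a submodule. -/
def FTsub (Ω : Set (Fin d → ZMod N)) : Submodule ℝ (EE d N) where
  carrier := FT Ω
  add_mem' := fun hf hg x hx => by
    simp only [Pi.add_apply]
    rw [hf x hx, hg x hx, add_zero]
  zero_mem' := fun x _ => rfl
  smul_mem' := fun c g hg x hx => by
    simp only [Pi.smul_apply]
    rw [hg x hx, smul_zero]

@[simp] lemma mem_FTsub {Ω : Set (Fin d → ZMod N)} {f : EE d N} :
    f ∈ FTsub (d := d) (N := N) Ω ↔ f ∈ FT Ω := Iff.rfl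

lemma card_filter_ne_false (hd : 1 ≤ d) :
    (univ.filter (fun ω : Fin d → Bool => ω ≠ fun _ => false)).card = 2 ^ d - 1 := by
  classical
  rw [Finset.filter_ne' univ (fun _ => false), Finset.card_erase_of_mem (mem_univ _),
    Finset.card_univ, Fintype.card_fun]
  simp

lemma two_pow_sub_one_odd (hd : 1 ≤ d) : Odd (2 ^ d - 1) :=
  Nat.Even.sub_odd (Nat.one_le_two_pow) (Nat.even_pow.mpr ⟨even_two, Nat.one_le_iff_ne_zero.mp hd⟩)
    odd_one

lemma prod_proj_smul (hd : 1 ≤ d) (c : ℝ) (g : EE d N) (x y : Fin d → ZMod N) :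
    ∏ ω ∈ univ.filter (fun ω : Fin d → Bool => ω ≠ fun _ => false), (c • g) (proj ω x y)
      = c ^ (2 ^ d - 1) *
        ∏ ω ∈ univ.filter (fun ω : Fin d → Bool => ω ≠ fun _ => false), g (proj ω x y) := by
  calc ∏ ω ∈ univ.filter (fun ω : Fin d → Bool => ω ≠ fun _ => false), (c • g) (proj ω x y)
      = ∏ ω ∈ univ.filter (fun ω : Fin d → Bool => ω ≠ fun _ => false),
          (c * g (proj ω x y)) := Finset.prod_congr rfl fun ω _ => by simp
    _ = (∏ _ω ∈ univ.filter (fun ω : Fin d → Bool => ω ≠ fun _ => false), c) *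
          ∏ ω ∈ univ.filter (fun ω : Fin d → Bool => ω ≠ fun _ => false), g (proj ω x y) :=
        Finset.prod_mul_distrib
    _ = _ := by rw [Finset.prod_const, card_filter_ne_false hd]

lemma dualFn_smul (hd : 1 ≤ d) (c : ℝ) (g : EE d N) (x : Fin d → ZMod N) :
    dualFn ν (c • g) x = c ^ (2 ^ d - 1) * dualFn ν g x := by
  unfold dualFn
  rw [Finset.mul_expect]
  refine Finset.expect_congr rfl fun y _ => ?_
  rw [prod_proj_smul hd c g x y, mul_assoc]

lemma dualFn_neg (hd : 1 ≤ d) (g : EE d N) :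
    dualFn ν (-g) = -dualFn ν g := by
  funext x
  have h : (-g : EE d N) = (-1 : ℝ) • g := by funext z; simp
  rw [h, dualFn_smul ν hd, Odd.neg_one_pow (two_pow_sub_one_odd hd)]
  simp

lemma exists_omega_true (hd : 1 ≤ d) :
    (fun _ => true : Fin d → Bool) ≠ (fun _ => false) := by
  intro h
  have := congrFun h ⟨0, hd⟩
  simp at this

lemma dualFn_eq_zero_of_factor {g : EE d N} {x : Fin d → ZMod N}
    (h : ∀ y : Fin d → ZMod N, ∃ ω ∈ univ.filter (fun ω : Fin d → Bool => ω ≠ fun _ => false),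
      g (proj ω x y) = 0) :
    dualFn ν g x = 0 := by
  unfold dualFn
  rw [show (0 : ℝ) = Finset.expect Finset.univ (fun _ : Fin d → ZMod N => (0 : ℝ)) by simp]
  refine Finset.expect_congr rfl fun y _ => ?_
  obtain ⟨ω, hω, hzero⟩ := h y
  rw [Finset.prod_eq_zero hω hzero, zero_mul]

lemma dualFn_zero (hd : 1 ≤ d) : dualFn ν (0 : EE d N) = 0 := by
  funext x
  refine dualFn_eq_zero_of_factor ν fun y => ?_
  exact ⟨fun _ => true, Finset.mem_filter.mpr ⟨mem_univ _, exists_omega_true hd⟩, rfl⟩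

lemma dualFn_mem_FT {Ω : Set (Fin d → ZMod N)} (hΩ : HasFaceStructure Ω)
    {g : EE d N} (hg : g ∈ FT Ω) : dualFn ν g ∈ FT Ω := by
  obtain ⟨ΩJ, hprop, hΩeq⟩ := hΩ
  intro x hx
  -- find J with x ∉ ΩJ J
  have hx' : ∃ J : Finset (Fin d), (J ≠ ∅ ∧ J ≠ univ) ∧ x ∉ ΩJ J := by
    by_contra hcon
    push_neg at hcon
    exact hx (by rw [hΩeq]; exact Set.mem_iInter₂.mpr fun J hJ => hcon J ⟨Finset.nonempty_iff_ne_empty.mpr (show J ≠ ∅ ∧ J ≠ univ from hJ).1, (show J ≠ ∅ ∧ J ≠ univ from hJ).2⟩)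
  obtain ⟨J, ⟨hJ1, hJ2⟩, hxJ⟩ := hx'
  classical
  refine dualFn_eq_zero_of_factor ν fun y => ?_
  refine ⟨fun i => decide (i ∈ J), Finset.mem_filter.mpr ⟨mem_univ _, ?_⟩, ?_⟩
  · intro hcon
    obtain ⟨j, hj⟩ := Finset.nonempty_iff_ne_empty.mpr hJ1
    have := congrFun hcon j
    simp [hj] at this
  · refine hg _ fun hmem => ?_
    -- proj agrees with x outside J
    have hΩsub : Ω ⊆ ΩJ J := by
      rw [hΩeq]
      exact Set.biInter_subset_of_mem (by exact ⟨hJ1, hJ2⟩)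
    have hPmem : proj (fun i => decide (i ∈ J)) x y ∈ ΩJ J := hΩsub hmem
    have hagree : ∀ i, i ∉ J → proj (fun i => decide (i ∈ J)) x y i = x i := by
      intro i hi
      simp [proj, hi]
    exact hxJ (hprop J hJ1 hJ2 _ x hagree hPmem)

lemma zero_mem_STset {Ω : Set (Fin d → ZMod N)} {νd : (Fin d → ZMod N) → ℝ}
    (hνd : ∀ x, 0 ≤ νd x) : (0 : EE d N) ∈ STset Ω νd :=
  ⟨fun _ _ => rfl, fun x => by simp; linarith [hνd x]⟩

lemma neg_mem_STset {Ω : Set (Fin d → ZMod N)} {νd : (Fin d → ZMod N) → ℝ}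
    {g : EE d N} (hg : g ∈ STset Ω νd) : -g ∈ STset Ω νd := by
  refine ⟨fun x hx => ?_, fun x => ?_⟩
  · simp [hg.1 x hx]
  · simpa using hg.2 x

lemma STset_isCompact {Ω : Set (Fin d → ZMod N)} {νd : (Fin d → ZMod N) → ℝ}
    (hνd : ∀ x, 0 ≤ νd x) : IsCompact (STset Ω νd) := by
  classical
  have heq : STset Ω νd = Set.univ.pi
      (fun x => if x ∈ Ω then Set.Icc (-(νd x + 2)) (νd x + 2) else ({0} : Set ℝ)) := by
    ext g
    simp only [STset, FT, Set.mem_setOf_eq, Set.mem_pi, Set.mem_univ, true_implies]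
    constructor
    · rintro ⟨h1, h2⟩ x
      by_cases hx : x ∈ Ω
      · simp only [hx, if_true, Set.mem_Icc]
        have := abs_le.mp (h2 x)
        exact ⟨by linarith [this.1], this.2⟩
      · simp [hx, h1 x hx]
    · intro h
      constructor
      · intro x hx
        have := h x
        simpa [hx] using this
      · intro x
        by_cases hx : x ∈ Ω
        · have := h x
          simp only [hx, if_true, Set.mem_Icc] at this
          exact abs_le.mpr ⟨by linarith [this.1], this.2⟩
        · have := h x
          simp only [hx, if_false, Set.mem_singleton_iff] at this
          rw [this]
          simp
          linarith [hνd x]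
  rw [heq]
  refine isCompact_univ_pi fun x => ?_
  by_cases hx : x ∈ Ω
  · simp only [hx, if_true]; exact isCompact_Icc
  · simp only [hx, if_false]; exact isCompact_singleton

lemma dualFn_continuous : Continuous fun g : EE d N => dualFn ν g := by
  refine continuous_pi fun x => ?_
  simp only [dualFn, Finset.expect_eq_sum_div_card]
  refine Continuous.div_const ?_ _
  refine continuous_finset_sum _ fun y _ => ?_
  refine Continuous.mul ?_ continuous_const
  exact continuous_finset_prod _ fun ω _ => continuous_apply _

end AuxLemmas2

section ConvexCompact

/-- Convex hull of a compact set in a finite-dimensional normed space is compact. -/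
lemma isCompact_convexHull_of_isCompact {E : Type} [NormedAddCommGroup E] [NormedSpace ℝ E]
    [FiniteDimensional ℝ E] {s : Set E} (hs : IsCompact s) : IsCompact (convexHull ℝ s) := by
  classical
  rcases s.eq_empty_or_nonempty with rfl | ⟨x0, hx0⟩
  · simp
  set n := Module.finrank ℝ E + 1 with hn
  have key : convexHull ℝ s =
      (fun p : (Fin n → ℝ) × (Fin n → E) => ∑ i, p.1 i • p.2 i) ''
        (stdSimplex ℝ (Fin n) ×ˢ Set.univ.pi fun _ => s) := by
    apply Set.Subset.antisymm
    · intro a ha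
      obtain ⟨ι, hι, z, w, hzs, hai, hw0, hw1, hzw⟩ := eq_pos_convex_span_of_mem_convexHull ha
      have hcard : Fintype.card ι ≤ n := by
        refine le_trans hai.card_le_finrank_succ ?_
        have := Submodule.finrank_le (vectorSpan ℝ (Set.range z))
        omega
      obtain ⟨e⟩ := Function.Embedding.nonempty_iff_card_le.mpr
        (by simpa using hcard : Fintype.card ι ≤ Fintype.card (Fin n))
      set w' : Fin n → ℝ := fun j => ∑ i : ι, if e i = j then w i else 0 with hw'
      set z' : Fin n → E := fun j => if h : ∃ i, e i = j then z h.choose else x0 with hz'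
      have hze : ∀ i : ι, z' (e i) = z i := by
        intro i
        have h : ∃ i', e i' = e i := ⟨i, rfl⟩
        have : h.choose = i := e.injective h.choose_spec
        simp only [hz', dif_pos h, this]
      have hsum_w' : ∑ j : Fin n, w' j = 1 := by
        rw [hw', Finset.sum_comm]
        rw [← hw1]
        refine Finset.sum_congr rfl fun i _ => ?_
        simp [Finset.sum_ite_eq]
      refine ⟨⟨w', z'⟩, ⟨⟨?_, hsum_w'⟩, ?_⟩, ?_⟩
      · intro j
        refine Finset.sum_nonneg fun i _ => ?_
        split
        · exact (hw0 i).le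
        · exact le_refl 0
      · intro j _
        simp only [hz']
        split
        · exact hzs (Set.mem_range_self _)
        · exact hx0
      · simp only
        rw [← hzw]
        have : ∀ j : Fin n, w' j • z' j = ∑ i : ι, if e i = j then w i • z' j else 0 := by
          intro j
          rw [hw', Finset.sum_smul]
          refine Finset.sum_congr rfl fun i _ => ?_
          split <;> simp
        rw [Finset.sum_congr rfl fun j _ => this j, Finset.sum_comm]
        refine Finset.sum_congr rfl fun i _ => ?_
        rw [Finset.sum_ite_eq univ (e i) (fun j => w i • z' j)]
        simp [hze i]
    · rintro x ⟨⟨w, z⟩, ⟨hw, hz⟩, rfl⟩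
      have hmass := Finset.centerMass_mem_convexHull (univ : Finset (Fin n)) (R := ℝ)
        (w := w) (fun i _ => hw.1 i) (by rw [hw.2]; norm_num) (z := z)
        (fun i _ => hz i (Set.mem_univ i))
      rwa [Finset.centerMass_eq_of_sum_1 _ _ hw.2] at hmass
  rw [key]
  refine (((isCompact_stdSimplex ℝ _).prod (isCompact_univ_pi fun _ => hs))).image ?_
  refine continuous_finset_sum _ fun i _ => ?_
  exact ((continuous_apply i).comp continuous_fst).smul ((continuous_apply i).comp continuous_snd)

end ConvexCompact


open Pointwise in
set_option maxHeartbeats 2000000 in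
/-- The dual BAC norm equals the infimum of `Σ|λ_i|` over representations `f = Σ λ_i Dg_i`. -/
theorem dual_BACnorm_eq (N d : ℕ) [NeZero N] (hd : 1 ≤ d)
    (ν : (I : Finset (Fin d)) → (I → ZMod N) → ℝ)
    (hν : ∀ I : Finset (Fin d), I ≠ univ → ∀ z, 0 ≤ ν I z)
    (νd : (Fin d → ZMod N) → ℝ) (hνd : ∀ x, 0 ≤ νd x)
    (Ω : Set (Fin d → ZMod N)) (hΩ : HasFaceStructure Ω)
    (hprod : ∀ x ∈ Ω,
      0 < ∏ I ∈ univ.filter (fun I : Finset (Fin d) => I ≠ univ), ν I (fun i => x i.1))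
    (hpos : ∀ f ∈ FT Ω, f ≠ 0 → 0 < wInner ν f (dualFn ν f))
    (f : (Fin d → ZMod N) → ℝ) (hf : f ∈ FT Ω) :
    sSup {r : ℝ | ∃ φ ∈ FT Ω, BACnorm ν Ω νd φ ≤ 1 ∧ r = |wInner ν f φ|} =
      sInf {r : ℝ | ∃ (k : ℕ) (lam : Fin k → ℝ) (g : Fin k → ((Fin d → ZMod N) → ℝ)),
        (∀ i, g i ∈ STset Ω νd) ∧
        (f = fun x => ∑ i, lam i * dualFn ν (g i) x) ∧ r = ∑ i, |lam i|} := by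
  classical
  set S := STset Ω νd with hSdef
  set Kset := dualFn ν '' S with hKdef
  set L : Set ℝ := {r : ℝ | ∃ φ ∈ FT Ω, BACnorm ν Ω νd φ ≤ 1 ∧ r = |wInner ν f φ|} with hLdef
  set R : Set ℝ := {r : ℝ | ∃ (k : ℕ) (lam : Fin k → ℝ) (g : Fin k → ((Fin d → ZMod N) → ℝ)),
        (∀ i, g i ∈ S) ∧
        (f = fun x => ∑ i, lam i * dualFn ν (g i) x) ∧ r = ∑ i, |lam i|} with hRdef
  have hScomp : IsCompact S := STset_isCompact hνd
  have hKcomp : IsCompact Kset := hScomp.image (dualFn_continuous ν)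
  -- feasibility extraction
  have hfeas : ∀ φ : EE d N, BACnorm ν Ω νd φ ≤ 1 → ∀ g ∈ S, |wInner ν φ (dualFn ν g)| ≤ 1 := by
    intro φ hφ g hg
    rw [BACnorm] at hφ
    rw [hSdef] at hg
    refine le_trans (le_csSup ?_
      (Set.mem_image_of_mem (fun g => |wInner ν φ (dualFn ν g)|) hg)) hφ
    have hcont : Continuous fun h : EE d N => |wInner ν φ (dualFn ν h)| := by
      have h1 : Continuous fun h : EE d N => wInner ν φ h :=
        (wB ν φ).continuous_of_finiteDimensional
      exact (h1.comp (dualFn_continuous ν)).abs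
    exact (hScomp.image hcont).bddAbove
  -- span property
  have hspan : ∀ v ∈ FT Ω, v ∈ Submodule.span ℝ Kset := by
    intro v hv
    by_contra hvW
    set V := FTsub (d := d) (N := N) Ω with hV
    set Wv : Submodule ℝ ↥V := (Submodule.span ℝ Kset).comap V.subtype with hWv
    have hvV : v ∈ V := hv
    have hq : Wv.mkQ ⟨v, hvV⟩ ≠ 0 := by
      rw [Submodule.mkQ_apply, Ne, Submodule.Quotient.mk_eq_zero]
      exact hvW
    obtain ⟨χ, hχ⟩ : ∃ χ : Module.Dual ℝ (↥V ⧸ Wv), χ (Wv.mkQ ⟨v, hvV⟩) ≠ 0 := by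
      by_contra hcon
      push_neg at hcon
      exact hq ((Module.forall_dual_apply_eq_zero_iff ℝ _).mp hcon)
    set Bv : ↥V →ₗ[ℝ] Module.Dual ℝ ↥V := ((wB ν).compl₂ V.subtype).comp V.subtype with hBv
    have hBv_apply : ∀ u w : ↥V, Bv u w = wInner ν u.1 w.1 := fun u w => rfl
    have hinj : Function.Injective Bv := by
      rw [← LinearMap.ker_eq_bot, Submodule.eq_bot_iff]
      intro u hu
      have hu' : Bv u = 0 := LinearMap.mem_ker.mp hu
      have h0 : wInner ν u.1 u.1 = 0 := by
        rw [← hBv_apply u u, hu']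
        rfl
      exact Subtype.ext (wInner_self_eq_zero ν hν hprod u.2 h0)
    have hsurj : Function.Surjective Bv :=
      (LinearMap.injective_iff_surjective_of_finrank_eq_finrank
        (Subspace.dual_finrank_eq).symm).mp hinj
    obtain ⟨uu, huu⟩ := hsurj (χ.comp Wv.mkQ)
    have huu0 : uu.1 ≠ 0 := by
      intro h0
      have hBu : Bv uu = 0 := by rw [show uu = 0 from Subtype.ext h0]; simp
      rw [huu] at hBu
      have := congrArg (fun ψ => ψ (⟨v, hvV⟩ : ↥V)) hBu
      simp only [LinearMap.comp_apply, LinearMap.zero_apply] at this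
      exact hχ this
    have horth : ∀ g ∈ S, wInner ν uu.1 (dualFn ν g) = 0 := by
      intro g hg
      have hgFT : dualFn ν g ∈ V := dualFn_mem_FT ν hΩ hg.1
      have hgW : (⟨dualFn ν g, hgFT⟩ : ↥V) ∈ Wv := by
        rw [hWv, Submodule.mem_comap]
        exact Submodule.subset_span ⟨g, hg, rfl⟩
      have h0 : Bv uu ⟨dualFn ν g, hgFT⟩ = 0 := by
        rw [huu]
        simp only [LinearMap.comp_apply, Submodule.mkQ_apply]
        rw [(Submodule.Quotient.mk_eq_zero _).mpr hgW]
        simp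
      rwa [hBv_apply] at h0
    set c : ℝ := 2 / (‖uu.1‖ + 1) with hc
    have hnorm_nonneg : (0:ℝ) ≤ ‖uu.1‖ := norm_nonneg _
    have hcpos : 0 < c := by positivity
    have hcS : c • uu.1 ∈ S := by
      refine ⟨fun x hx => ?_, fun x => ?_⟩
      · simp only [Pi.smul_apply]
        rw [uu.2 x hx, smul_zero]
      · have hx1 : |uu.1 x| ≤ ‖uu.1‖ := by
          simpa [Real.norm_eq_abs] using norm_le_pi_norm uu.1 x
        have h2 : |(c • uu.1) x| = c * |uu.1 x| := by
          simp [abs_mul, abs_of_pos hcpos]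
        rw [h2]
        have h3 : c * |uu.1 x| ≤ c * ‖uu.1‖ := by
          exact mul_le_mul_of_nonneg_left hx1 hcpos.le
        have h4 : c * ‖uu.1‖ ≤ 2 := by
          rw [hc, div_mul_eq_mul_div, div_le_iff₀ (by positivity)]
          nlinarith
        linarith [hνd x]
    have h1 := horth _ hcS
    have hDsmul : dualFn ν (c • uu.1) = (c ^ (2 ^ d - 1)) • dualFn ν uu.1 :=
      funext fun x => by rw [dualFn_smul ν hd]; simp
    rw [hDsmul] at h1
    have h2 : wInner ν uu.1 ((c ^ (2 ^ d - 1)) • dualFn ν uu.1)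
        = c ^ (2 ^ d - 1) * wInner ν uu.1 (dualFn ν uu.1) := by
      rw [← wB_apply, map_smul, smul_eq_mul, wB_apply]
    rw [h2] at h1
    have hpow : (0:ℝ) < c ^ (2 ^ d - 1) := pow_pos hcpos _
    have hgt := hpos uu.1 uu.2 huu0
    nlinarith
  -- bound lemma
  have hbound : ∀ (k : ℕ) (lam : Fin k → ℝ) (g : Fin k → EE d N), (∀ i, g i ∈ S) →
      (f = fun x => ∑ i, lam i * dualFn ν (g i) x) →
      ∀ φ, BACnorm ν Ω νd φ ≤ 1 → |wInner ν f φ| ≤ ∑ i, |lam i| := by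
    intro k lam g hgS hrep φ hφ
    have hfun : f = ∑ i : Fin k, lam i • dualFn ν (g i) := by
      rw [hrep]; funext x; simp [Finset.sum_apply]
    have h1 : wInner ν φ f = ∑ i : Fin k, lam i * wInner ν φ (dualFn ν (g i)) := by
      rw [← wB_apply, hfun, map_sum]
      exact Finset.sum_congr rfl fun i _ => by rw [map_smul, smul_eq_mul, wB_apply]
    rw [wInner_symm, h1]
    refine le_trans (Finset.abs_sum_le_sum_abs _ _) (Finset.sum_le_sum fun i _ => ?_)
    rw [abs_mul]
    have h2 := hfeas φ hφ (g i) (hgS i)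
    nlinarith [abs_nonneg (lam i), abs_nonneg (wInner ν φ (dualFn ν (g i)))]
  -- representation of f
  obtain ⟨k0, lam0, gs0, hgs0S, hfrep0⟩ :
      ∃ (k : ℕ) (lam : Fin k → ℝ) (g : Fin k → EE d N),
        (∀ i, g i ∈ S) ∧ (f = fun x => ∑ i, lam i * dualFn ν (g i) x) := by
    have hf' := hspan f hf
    rw [Submodule.mem_span_set'] at hf'
    obtain ⟨n, cf, gsub, hsum⟩ := hf'
    choose gs hgsS hgsD using fun i : Fin n => (gsub i).2
    refine ⟨n, cf, gs, hgsS, ?_⟩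
    funext x
    rw [← hsum]
    simp only [Finset.sum_apply, Pi.smul_apply, smul_eq_mul]
    exact Finset.sum_congr rfl fun i _ => by rw [hgsD i]
  have hRne : R.Nonempty := ⟨∑ i, |lam0 i|, k0, lam0, gs0, hgs0S, hfrep0, rfl⟩
  have hRlb : ∀ b ∈ R, (0:ℝ) ≤ b := by
    rintro b ⟨k, lam, g, hgS, hrep, rfl⟩
    exact Finset.sum_nonneg fun i _ => abs_nonneg _
  have hL0 : (0:ℝ) ∈ L := by
    refine ⟨0, fun x _ => rfl, ?_, by rw [wInner_zero_right]; simp⟩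
    refine Real.sSup_le ?_ zero_le_one
    rintro x ⟨g, hg, rfl⟩
    show |wInner ν 0 (dualFn ν g)| ≤ 1
    rw [wInner_zero_left]
    simp
  have hLbdd : BddAbove L := by
    refine ⟨∑ i, |lam0 i|, ?_⟩
    rintro r ⟨φ, hφFT, hφ, rfl⟩
    exact hbound k0 lam0 gs0 hgs0S hfrep0 φ hφ
  refine le_antisymm ?_ ?_
  · refine le_csInf hRne ?_
    rintro b ⟨k, lam, g, hgS, hrep, rfl⟩
    refine Real.sSup_le ?_ (Finset.sum_nonneg fun i _ => abs_nonneg _)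
    rintro x ⟨φ, hφFT, hφ, rfl⟩
    exact hbound k lam g hgS hrep φ hφ
  · have hs0 : (0:ℝ) ≤ sSup L := le_csSup hLbdd hL0
    refine le_of_forall_pos_le_add fun ε hε => ?_
    have hsε : (0:ℝ) < sSup L + ε := by linarith
    set A := convexHull ℝ Kset with hA
    have hAcomp : IsCompact A := isCompact_convexHull_of_isCompact hKcomp
    have hAconv : Convex ℝ A := convex_convexHull ℝ Kset
    set C : Set (EE d N) := (sSup L + ε) • A with hC
    have hCcomp : IsCompact C := hAcomp.smul _
    have hCconv : Convex ℝ C := hAconv.smul _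
    by_cases hfC : f ∈ C
    · -- exact representation with total weight sSup L + ε
      obtain ⟨a, haA, hfa⟩ := Set.mem_smul_set.mp hfC
      rw [hA, _root_.convexHull_eq] at haA
      obtain ⟨ι, t, w, z, hw0, hw1, hzK, hcm⟩ := haA
      have ha : a = ∑ i ∈ t, w i • z i := by
        rw [← hcm, Finset.centerMass_eq_of_sum_1 _ _ hw1]
      choose gg hggS hggD using fun i : {x // x ∈ t} => hzK i.1 i.2
      set e := t.equivFin with he
      refine csInf_le ⟨0, hRlb⟩ ?_
      refine ⟨t.card, fun j => (sSup L + ε) * w (e.symm j).1, fun j => gg (e.symm j),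
        fun j => hggS _, ?_, ?_⟩
      · have hsum_eq : ∀ (F : {x // x ∈ t} → ℝ),
            ∑ j : Fin t.card, F (e.symm j) = ∑ i ∈ t.attach, F i := by
          intro F
          rw [Equiv.sum_comp e.symm F, Finset.univ_eq_attach]
        funext x
        have hfx : f x = (sSup L + ε) * a x := by
          rw [← hfa]; simp
        rw [hfx, ha]
        simp only [Finset.sum_apply, Pi.smul_apply, smul_eq_mul]
        rw [Finset.mul_sum]
        rw [← Finset.sum_attach t (fun i => (sSup L + ε) * (w i * z i x))]
        rw [← hsum_eq (fun i : {x // x ∈ t} => (sSup L + ε) * (w i.1 * z i.1 x))]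
        refine Finset.sum_congr rfl fun j _ => ?_
        rw [hggD (e.symm j)]
        ring
      · have hsum_eq : ∀ (F : {x // x ∈ t} → ℝ),
            ∑ j : Fin t.card, F (e.symm j) = ∑ i ∈ t.attach, F i := by
          intro F
          rw [Equiv.sum_comp e.symm F, Finset.univ_eq_attach]
        have habs : ∀ j : Fin t.card, |(sSup L + ε) * w (e.symm j).1|
            = (sSup L + ε) * w (e.symm j).1 := by
          intro j
          exact abs_of_nonneg (mul_nonneg hsε.le (hw0 _ (e.symm j).2))
        rw [Finset.sum_congr rfl fun j _ => habs j,
          hsum_eq (fun i : {x // x ∈ t} => (sSup L + ε) * w i.1),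
          Finset.sum_attach t (fun i => (sSup L + ε) * w i), ← Finset.mul_sum, hw1, mul_one]
    · -- separation: contradiction
      exfalso
      obtain ⟨φL, u, hu1, hu2⟩ :=
        geometric_hahn_banach_closed_point hCconv hCcomp.isClosed hfC
      have h0C : (0 : EE d N) ∈ C := by
        rw [hC]
        refine ⟨dualFn ν 0, subset_convexHull ℝ Kset ⟨0, zero_mem_STset hνd, rfl⟩, ?_⟩
        rw [dualFn_zero ν hd]
        simp
      have hu0 : 0 < u := by
        have := hu1 0 h0C
        simpa using this
      set cc : ℝ := (sSup L + ε) / u with hcc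
      have hccpos : 0 < cc := div_pos hsε hu0
      set V := FTsub (d := d) (N := N) Ω with hV
      set Bv : ↥V →ₗ[ℝ] Module.Dual ℝ ↥V := ((wB ν).compl₂ V.subtype).comp V.subtype with hBv
      have hBv_apply : ∀ u' w' : ↥V, Bv u' w' = wInner ν u'.1 w'.1 := fun _ _ => rfl
      have hinj : Function.Injective Bv := by
        rw [← LinearMap.ker_eq_bot, Submodule.eq_bot_iff]
        intro u' hu'
        have hB0 : Bv u' = 0 := LinearMap.mem_ker.mp hu'
        have h0 : wInner ν u'.1 u'.1 = 0 := by
          rw [← hBv_apply u' u', hB0]; rfl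
        exact Subtype.ext (wInner_self_eq_zero ν hν hprod u'.2 h0)
      have hsurj : Function.Surjective Bv :=
        (LinearMap.injective_iff_surjective_of_finrank_eq_finrank
          (Subspace.dual_finrank_eq).symm).mp hinj
      obtain ⟨ψ, hψ⟩ := hsurj (cc • (φL.toLinearMap.comp V.subtype))
      have hψ_apply : ∀ w' : ↥V, wInner ν ψ.1 w'.1 = cc * φL w'.1 := by
        intro w'
        have := congrArg (fun χ => χ w') hψ
        simpa [hBv_apply] using this
      -- ψ is feasible
      have hψfeas : ∀ g ∈ S, |wInner ν ψ.1 (dualFn ν g)| ≤ 1 := by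
        intro g hg
        have hgFT : dualFn ν g ∈ V := dualFn_mem_FT ν hΩ hg.1
        have heq := hψ_apply ⟨dualFn ν g, hgFT⟩
        have hφub : φL (dualFn ν g) < u / (sSup L + ε) := by
          have hmem : (sSup L + ε) • dualFn ν g ∈ C :=
            Set.smul_mem_smul_set (subset_convexHull ℝ Kset ⟨g, hg, rfl⟩)
          have := hu1 _ hmem
          rw [map_smul, smul_eq_mul] at this
          rw [lt_div_iff₀ hsε]
          linarith
        have hφlb : -(u / (sSup L + ε)) < φL (dualFn ν g) := by
          have hmem : (sSup L + ε) • dualFn ν (-g) ∈ C :=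
            Set.smul_mem_smul_set (subset_convexHull ℝ Kset ⟨-g, neg_mem_STset hg, rfl⟩)
          have h3 := hu1 _ hmem
          rw [dualFn_neg ν hd, map_smul, smul_eq_mul, map_neg] at h3
          rw [neg_lt, lt_div_iff₀ hsε]
          linarith
        have habs : |φL (dualFn ν g)| ≤ u / (sSup L + ε) :=
          abs_le.mpr ⟨hφlb.le, hφub.le⟩
        rw [heq, abs_mul, abs_of_pos hccpos]
        calc cc * |φL (dualFn ν g)| ≤ cc * (u / (sSup L + ε)) :=
              mul_le_mul_of_nonneg_left habs hccpos.le
          _ = 1 := by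
              rw [hcc]
              field_simp
      have hψBAC : BACnorm ν Ω νd ψ.1 ≤ 1 := by
        refine Real.sSup_le ?_ zero_le_one
        rintro x ⟨g, hg, rfl⟩
        exact hψfeas g hg
      have hmemL : |wInner ν f ψ.1| ∈ L := ⟨ψ.1, ψ.2, hψBAC, rfl⟩
      have hle : |wInner ν f ψ.1| ≤ sSup L := le_csSup hLbdd hmemL
      have hgt : sSup L + ε < wInner ν ψ.1 f := by
        have := hψ_apply ⟨f, hf⟩
        rw [this]
        have h4 : cc * u < cc * φL f := mul_lt_mul_of_pos_left hu2 hccpos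
        have h5 : cc * u = sSup L + ε := by
          rw [hcc]; field_simp
        linarith
      have h6 : wInner ν ψ.1 f ≤ |wInner ν f ψ.1| := by
        rw [wInner_symm]
        exact le_abs_self _
      linarith

end
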